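/- The Kolmogorov shear profile u(x₂) = sin(x₂) on the circle ℝ/2πℤ satisfies the spectral-gap flow assumption with exponent m = 2: there exist N∈ℕ, c₀>0 and δ₀∈(0,1) such that for every λ∈ℝ and every δ∈(0,δ₀) there exist n≤N points y¹,…,yⁿ∈[0,2π) with |sin(x₂) − λ| > c₀δ² for every x₂∈[0,2π) whose distance on the circle ℝ/2πℤ to each of y¹,…,yⁿ is at least δ. -/

import Mathlib

open Set Real

lemma key_dist (x y δ : ℝ) (h : δ ≤ dist ((x : AddCircle (2*π))) ((y : AddCircle (2*π)))) :
    δ / π ≤ |Real.sin ((x - y) / 2)| := by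
  have hπ := Real.pi_pos
  rw [dist_eq_norm, ← AddCircle.coe_sub, AddCircle.norm_eq] at h
  set k : ℤ := round ((2*π)⁻¹ * (x - y)) with hk
  set t : ℝ := x - y - k * (2*π) with ht
  have h1 : t = (2*π) * ((2*π)⁻¹ * (x - y) - k) := by
    field_simp [ht]
    ring
  have habs : |t| ≤ π := by
    have h2 := abs_sub_round ((2*π)⁻¹ * (x - y))
    rw [h1, abs_mul, abs_of_pos (by linarith)]
    rw [← hk] at h2
    nlinarith
  have hxy : (x - y) / 2 = t / 2 + k * π := by rw [ht]; ring
  have hsin : |Real.sin ((x - y)/2)| = |Real.sin (t/2)| := by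
    rw [hxy, Real.sin_add_int_mul_pi, abs_mul]
    rcases Int.even_or_odd k with he | ho
    · rw [he.neg_one_zpow]; norm_num
    · rw [ho.neg_one_zpow]; norm_num
  rw [hsin]
  have hhalf : |t/2| ≤ π/2 := by rw [abs_div, abs_two]; linarith
  have := Real.mul_abs_le_abs_sin hhalf
  have hδt : δ ≤ |t| := by
    calc δ ≤ |x - y - round ((2*π)⁻¹ * (x-y)) * (2*π)| := h
    _ = |t| := by rw [ht]
  rw [abs_div, abs_two] at this
  rw [div_le_iff₀ hπ]
  calc |Real.sin (t/2)| * π ≥ (2/π * (|t|/2)) * π := by nlinarith [abs_nonneg (Real.sin (t/2))]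
    _ = |t| := by field_simp
    _ ≥ δ := hδt

lemma prod_id (x a : ℝ) :
    Real.sin x - Real.sin a = -2 * Real.sin ((x - a)/2) * Real.sin ((x - (π - a))/2) := by
  rw [Real.sin_sub_sin]
  have h : Real.sin ((x - (π - a))/2) = -Real.cos ((x + a)/2) := by
    rw [show (x - (π - a))/2 = -(π/2 - (x+a)/2) by ring, Real.sin_neg, Real.sin_pi_div_two_sub]
  rw [h]; ring

def SatisfiesFlowAssumption (u : ℝ → ℝ) (m : ℕ) : Prop :=
  ∃ N : ℕ, ∃ c₀ : ℝ, 0 < c₀ ∧ ∃ δ₀ ∈ Ioo (0:ℝ) 1,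
    ∀ lam : ℝ, ∀ δ ∈ Ioo (0:ℝ) δ₀,
      ∃ n ≤ N, ∃ y : Fin n → ℝ, (∀ j, y j ∈ Ico (0:ℝ) (2 * π)) ∧
        ∀ x₂ ∈ Ico (0:ℝ) (2 * π),
          (∀ j, δ ≤ dist ((x₂ : AddCircle (2 * π))) ((y j : AddCircle (2 * π)))) →
            c₀ * δ ^ m < |u x₂ - lam|


/-- The Kolmogorov shear profile `u(x₂) = sin(x₂)` satisfies the spectral-gap flow
assumption with exponent `m = 2`. -/
theorem kolmogorov_flow_satisfies_flow_assumption :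
    SatisfiesFlowAssumption Real.sin 2 := by
  have hπ := Real.pi_pos
  refine ⟨2, 1/π^2, by positivity, 1/2, ⟨by norm_num, by norm_num⟩, ?_⟩
  intro lam δ hδ
  obtain ⟨hδ0, hδ1⟩ := hδ
  set lam' : ℝ := max (-1) (min 1 lam) with hlam'
  have hl1 : -1 ≤ lam' := le_max_left _ _
  have hl2 : lam' ≤ 1 := max_le (by norm_num) (min_le_left _ _)
  set a : ℝ := Real.arcsin lam' with ha
  have ha1 : -(π/2) ≤ a := Real.neg_pi_div_two_le_arcsin _
  have ha2 : a ≤ π/2 := Real.arcsin_le_pi_div_two _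
  have hsa : Real.sin a = lam' := Real.sin_arcsin hl1 hl2
  set y₀ : ℝ := if 0 ≤ a then a else a + 2*π with hy₀
  refine ⟨2, le_refl _, fun j => if j = 0 then y₀ else π - a, ?_, ?_⟩
  · intro j
    by_cases hj : j = 0 <;> simp only [hj, if_true, if_false, reduceIte]
    · rw [hy₀]; split_ifs with h
      · exact ⟨h, by linarith⟩
      · constructor <;> [linarith; linarith]
    · exact ⟨by linarith, by linarith⟩
  · intro x hx hdist
    have hd0 : δ ≤ dist ((x : AddCircle (2*π))) ((y₀ : AddCircle (2*π))) := by
      simpa using hdist 0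
    have hd1 : δ ≤ dist ((x : AddCircle (2*π))) (((π - a : ℝ) : AddCircle (2*π))) := by
      simpa using hdist 1
    have hcoe : ((y₀ : ℝ) : AddCircle (2*π)) = ((a : ℝ) : AddCircle (2*π)) := by
      rw [hy₀]; split_ifs with h
      · rfl
      · exact AddCircle.coe_add_period (2*π) a
    rw [hcoe] at hd0
    have e0 : δ / π ≤ |Real.sin ((x - a)/2)| := key_dist x a δ hd0
    have e1 : δ / π ≤ |Real.sin ((x - (π - a))/2)| := key_dist x (π - a) δ hd1
    have hprod : |Real.sin x - lam'| =
        2 * |Real.sin ((x - a)/2)| * |Real.sin ((x - (π - a))/2)| := by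
      rw [← hsa, prod_id, abs_mul, abs_mul]
      norm_num
    have hclamp : |Real.sin x - lam'| ≤ |Real.sin x - lam| := by
      have hs1 : Real.sin x ≤ 1 := Real.sin_le_one x
      have hs2 : -1 ≤ Real.sin x := Real.neg_one_le_sin x
      rcases le_total lam (-1) with h | h
      · have hh : lam' = -1 := by
          rw [hlam', min_eq_right (by linarith : lam ≤ 1), max_eq_left h]
        rw [hh, abs_of_nonneg (by linarith), abs_of_nonneg (by linarith)]; linarith
      rcases le_total 1 lam with h2 | h2
      · have hh : lam' = 1 := by
          rw [hlam', min_eq_left h2, max_eq_right (by norm_num : (-1:ℝ) ≤ 1)]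
        rw [hh, abs_of_nonpos (by linarith), abs_of_nonpos (by linarith)]; linarith
      · have hh : lam' = lam := by
          rw [hlam', min_eq_right h2, max_eq_right h]
        rw [hh]
    have hδπ : 0 < δ / π := by positivity
    calc 1/π^2 * δ^2 < 2 * (δ/π) * (δ/π) := by
          have h1 : 2 * (δ/π) * (δ/π) = 2 * δ^2 / π^2 := by field_simp
          have h2 : 1/π^2 * δ^2 = δ^2 / π^2 := by ring
          rw [h1, h2, div_lt_div_iff₀ (by positivity) (by positivity)]
          nlinarith [mul_pos (pow_pos hδ0 2) (pow_pos hπ 2)]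
      _ ≤ 2 * |Real.sin ((x - a)/2)| * |Real.sin ((x - (π - a))/2)| := by
          have := abs_nonneg (Real.sin ((x - a)/2))
          nlinarith
      _ = |Real.sin x - lam'| := hprod.symm
      _ ≤ |Real.sin x - lam| := hclamp
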